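/- Let G=(V,E) be a DAG and 𝒫 a path cover of G of size t. Then there exists a path cover 𝒫' of G with |𝒫'| = t whose support (set of distinct edges used by the paths of 𝒫') has fewer than 2|V| edges. -/

import Mathlib

open Finset

section Prelude

variable {V : Type*}

/-- A (directed) path in the graph with edge relation `E`: nonempty, consecutive
vertices joined by edges, and vertices pairwise distinct. -/
def IsPathOn (E : V → V → Prop) (p : List V) : Prop :=
  p ≠ [] ∧ p.Chain' E ∧ p.Nodup

/-- Reachability in the graph with edge relation `E`. -/
def Reaches (E : V → V → Prop) : V → V → Prop := Relation.ReflTransGen E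

/-- The edges of a path, as the list of consecutive pairs of vertices. -/
def pathEdges (p : List V) : List (V × V) := p.zip p.tail

/-- A path cover: a multiset of paths such that every vertex is on some path. -/
def IsPathCover (E : V → V → Prop) (P : Multiset (List V)) : Prop :=
  (∀ p ∈ P, IsPathOn E p) ∧ ∀ v : V, ∃ p ∈ P, v ∈ p

/-- The width of a graph: the minimum size of a path cover. -/
noncomputable def gwidth (E : V → V → Prop) : ℕ :=
  sInf {n | ∃ P : Multiset (List V), IsPathCover E P ∧ Multiset.card P = n}

/-- A DAG: no proper (directed) cycles. -/
def IsDAG (E : V → V → Prop) : Prop := ∀ v, ¬ Relation.TransGen E v v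

/-- The edge relation of a finite edge set. -/
def edgeRel (E : Finset (V × V)) : V → V → Prop := fun a b => (a, b) ∈ E

/-- Multiplicity of an edge with respect to a multiset of paths. -/
def mult [DecidableEq V] (P : Multiset (List V)) (e : V × V) : ℕ :=
  Multiset.countP (fun p => e ∈ pathEdges p) P

/-- A flow network: a finite edge set, source, sink, and lower bounds (demands). -/
structure FlowNet (V : Type*) where
  E : Finset (V × V)
  s : V
  t : V
  d : V × V → ℕ

/-- A flow: supported on edges, satisfying the demands, and flow conservation at
every vertex other than the source and the sink. -/
def IsFlow [Fintype V] (N : FlowNet V) (f : V × V → ℕ) : Prop :=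
  (∀ e, e ∉ N.E → f e = 0) ∧ (∀ e ∈ N.E, N.d e ≤ f e) ∧
  ∀ v : V, v ≠ N.s → v ≠ N.t → (∑ u : V, f (u, v)) = ∑ u : V, f (v, u)

/-- The size of a flow: net outflow at the source. -/
def flowSize [Fintype V] (N : FlowNet V) (f : V × V → ℕ) : ℤ :=
  (∑ u : V, (f (N.s, u) : ℤ)) - ∑ u : V, (f (u, N.s) : ℤ)

/-- An `st`-cut, given by the source side `S` (the sink side is the complement). -/
def IsCut (N : FlowNet V) (S : Set V) : Prop := N.s ∈ S ∧ N.t ∉ S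

/-- A one-way cut: a cut with no edge crossing from `T = Sᶜ` to `S`. -/
def IsOwCut (N : FlowNet V) (S : Set V) : Prop :=
  IsCut N S ∧ ∀ e ∈ N.E, e.1 ∉ S → e.2 ∉ S

open Classical in
/-- The demand of a cut: sum of demands of edges crossing from `S` to `T`. -/
noncomputable def cutDemand (N : FlowNet V) (S : Set V) : ℕ :=
  ∑ e ∈ N.E.filter (fun e => e.1 ∈ S ∧ e.2 ∉ S), N.d e

open Classical in
/-- The net flow across a cut: flow from `S` to `T` minus flow from `T` to `S`. -/
noncomputable def cutFlow (N : FlowNet V) (S : Set V) (f : V × V → ℕ) : ℤ :=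
  (∑ e ∈ N.E.filter (fun e => e.1 ∈ S ∧ e.2 ∉ S), (f e : ℤ))
    - ∑ e ∈ N.E.filter (fun e => e.1 ∉ S ∧ e.2 ∈ S), (f e : ℤ)

/-- The residual graph of a network w.r.t. a flow `f`: reverse edges of all edges,
plus the edges whose flow strictly exceeds the demand. -/
def ResidualEdge (N : FlowNet V) (f : V × V → ℕ) (u v : V) : Prop :=
  (v, u) ∈ N.E ∨ ((u, v) ∈ N.E ∧ N.d (u, v) < f (u, v))

/-- Vertices of the flow reduction: two copies of each vertex, plus source/sink. -/
abbrev FR (V : Type*) := (V ⊕ V) ⊕ Bool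

def vinF (v : V) : FR V := Sum.inl (Sum.inl v)
def voutF (v : V) : FR V := Sum.inl (Sum.inr v)
def fsrc : FR V := Sum.inr false
def fsnk : FR V := Sum.inr true

/-- Demands of the flow reduction: `1` on each edge `(vin v, vout v)`, else `0`. -/
def redD [DecidableEq V] : FR V × FR V → ℕ
  | (Sum.inl (Sum.inl a), Sum.inl (Sum.inr b)) => if a = b then 1 else 0
  | _ => 0

/-- The flow reduction of the DAG with edge set `E`. -/
def redNet [Fintype V] [DecidableEq V] (E : Finset (V × V)) : FlowNet (FR V) where
  E := (univ.image fun v : V => (fsrc, vinF v)) ∪ (univ.image fun v : V => (voutF v, fsnk))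
        ∪ (univ.image fun v : V => (vinF v, voutF v))
        ∪ (E.image fun e => (voutF e.1, vinF e.2))
  s := fsrc
  t := fsnk
  d := redD

/-- The layered cut `L^{≤ l}`: the source together with all split vertices of level `≤ l`. -/
def layerCut (ℓ : FR V → ℤ) (l : ℤ) : Set (FR V) :=
  {x | x = fsrc ∨ ((∃ v : V, x = vinF v ∨ x = voutF v) ∧ ℓ x ≤ l)}

open Classical in
/-- The layered antichain `A^l`. -/
noncomputable def layerAntichain [Fintype V] (ℓ : FR V → ℤ) (l : ℤ) : Finset V :=
  univ.filter (fun v => ℓ (vinF v) ≤ l ∧ l < ℓ (voutF v))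

end Prelude

set_option linter.unusedSectionVars false

section Aux
variable {V : Type*} [DecidableEq V]

lemma pathEdges_cons_cons (a b : V) (l : List V) :
    pathEdges (a :: b :: l) = (a, b) :: pathEdges (b :: l) := rfl

lemma pathEdges_single (a : V) : pathEdges [a] = [] := rfl

lemma mem_of_mem_pathEdges {p : List V} {e : V × V} (h : e ∈ pathEdges p) :
    e.1 ∈ p ∧ e.2 ∈ p.tail := by
  induction p with
  | nil => simp [pathEdges] at h
  | cons a l ih =>
    cases l with
    | nil => simp [pathEdges] at h
    | cons b l' =>
      rw [pathEdges_cons_cons] at h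
      rcases List.mem_cons.1 h with h | h
      · subst h; simp
      · obtain ⟨h1, h2⟩ := ih h
        exact ⟨List.mem_cons_of_mem _ h1, List.mem_cons_of_mem _ h2⟩

lemma rel_of_mem_pathEdges {R : V → V → Prop} {p : List V} (hc : p.Chain' R)
    {e : V × V} (h : e ∈ pathEdges p) : R e.1 e.2 := by
  induction p with
  | nil => simp [pathEdges] at h
  | cons a l ih =>
    cases l with
    | nil => simp [pathEdges] at h
    | cons b l' =>
      rw [pathEdges_cons_cons] at h
      rcases List.mem_cons.1 h with h | h
      · subst h; exact hc.rel_head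
      · exact ih hc.tail h

lemma nodup_pathEdges {p : List V} (hp : p.Nodup) : (pathEdges p).Nodup := by
  induction p with
  | nil => simp [pathEdges]
  | cons a l ih =>
    cases l with
    | nil => simp [pathEdges]
    | cons b l' =>
      rw [pathEdges_cons_cons]
      refine List.Nodup.cons ?_ (ih hp.of_cons)
      intro hmem
      exact (List.nodup_cons.1 hp).1 ((mem_of_mem_pathEdges hmem).1)

lemma mem_iff_head_or_edge {p : List V} {v : V} :
    v ∈ p ↔ p.head? = some v ∨ ∃ u, (u, v) ∈ pathEdges p := by
  induction p with
  | nil => simp [pathEdges]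
  | cons a l ih =>
    cases l with
    | nil => simp [pathEdges, eq_comm]
    | cons b l' =>
      rw [pathEdges_cons_cons]
      constructor
      · intro h
        rcases List.mem_cons.1 h with h | h
        · left; simp [h]
        · rcases ih.1 h with h | ⟨u, hu⟩
          · right; exact ⟨a, by simp_all⟩
          · right; exact ⟨u, List.mem_cons_of_mem _ hu⟩
      · rintro (h | ⟨u, hu⟩)
        · simp at h; simp [h]
        · rcases List.mem_cons.1 hu with h | h
          · have : v = b := congrArg Prod.snd h
            subst this; simp
          · exact List.mem_cons_of_mem _ (ih.2 (Or.inr ⟨u, h⟩))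

lemma path_balance {p : List V} (hp : p ≠ []) (v : V) :
    (if p.head? = some v then 1 else 0) + (pathEdges p).countP (fun e => e.2 = v)
      = (if p.getLast? = some v then 1 else 0) + (pathEdges p).countP (fun e => e.1 = v) := by
  induction p with
  | nil => simp at hp
  | cons a l ih =>
    cases l with
    | nil => simp [pathEdges]
    | cons b l' =>
      rw [pathEdges_cons_cons]
      have := ih (by simp)
      rw [List.countP_cons, List.countP_cons]
      simp only [List.head?_cons, List.getLast?_cons_cons, Option.some.injEq,
        decide_eq_true_eq] at *
      split_ifs at * <;> omega
      
end Aux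

section Aux2
variable {V : Type*} [DecidableEq V]

lemma chain'_reflTransGen_getLast {R : V → V → Prop} {p : List V} {a : V}
    (hc : p.Chain' R) (h : p.getLast? = some a) : ∀ x ∈ p, Relation.ReflTransGen R x a := by
  induction p with
  | nil => simp at h
  | cons c l ih =>
    cases l with
    | nil =>
      simp only [List.getLast?_singleton, Option.some.injEq] at h
      subst h; intro x hx
      simp at hx; subst hx; exact Relation.ReflTransGen.refl
    | cons b l' =>
      rw [List.getLast?_cons_cons] at h
      have ihl := ih hc.tail h
      intro x hx
      rcases List.mem_cons.1 hx with rfl | hx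
      · exact Relation.ReflTransGen.head hc.rel_head (ihl b List.mem_cons_self)
      · exact ihl x hx

lemma sum_ite_mem_snd [Fintype V] (l : List (V × V)) (hl : l.Nodup) (v : V) :
    ∑ u : V, (if (u, v) ∈ l then 1 else 0) = l.countP (fun e => e.2 = v) := by
  induction l with
  | nil => simp
  | cons e l ih =>
    have he : e ∉ l := (List.nodup_cons.1 hl).1
    have hpt : ∀ u : V, (if (u, v) ∈ e :: l then (1 : ℕ) else 0)
        = (if (u, v) = e then 1 else 0) + (if (u, v) ∈ l then 1 else 0) := by
      intro u
      by_cases h1 : (u, v) = e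
      · subst h1; simp [he]
      · by_cases h2 : (u, v) ∈ l <;> simp [h1, h2, List.mem_cons]
    rw [Finset.sum_congr rfl fun u _ => hpt u, Finset.sum_add_distrib,
      ih (List.nodup_cons.1 hl).2, List.countP_cons]
    have : ∑ u : V, (if (u, v) = e then (1 : ℕ) else 0) = if e.2 = v then 1 else 0 := by
      rcases e with ⟨a, b⟩
      by_cases h : b = v
      · subst h; simp [Prod.ext_iff]
      · rw [Finset.sum_eq_zero, if_neg h]
        intro u _
        rw [if_neg]
        intro hh
        exact h (congrArg Prod.snd hh).symm
    rw [this]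
    simp only [decide_eq_true_eq]
    omega

lemma sum_ite_mem_fst [Fintype V] (l : List (V × V)) (hl : l.Nodup) (v : V) :
    ∑ u : V, (if (v, u) ∈ l then 1 else 0) = l.countP (fun e => e.1 = v) := by
  induction l with
  | nil => simp
  | cons e l ih =>
    have he : e ∉ l := (List.nodup_cons.1 hl).1
    have hpt : ∀ u : V, (if (v, u) ∈ e :: l then (1 : ℕ) else 0)
        = (if (v, u) = e then 1 else 0) + (if (v, u) ∈ l then 1 else 0) := by
      intro u
      by_cases h1 : (v, u) = e
      · subst h1; simp [he]
      · by_cases h2 : (v, u) ∈ l <;> simp [h1, h2, List.mem_cons]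
    rw [Finset.sum_congr rfl fun u _ => hpt u, Finset.sum_add_distrib,
      ih (List.nodup_cons.1 hl).2, List.countP_cons]
    have : ∑ u : V, (if (v, u) = e then (1 : ℕ) else 0) = if e.1 = v then 1 else 0 := by
      rcases e with ⟨a, b⟩
      by_cases h : a = v
      · subst h; simp [Prod.ext_iff]
      · rw [Finset.sum_eq_zero, if_neg h]
        intro u _
        rw [if_neg]
        intro hh
        exact h (congrArg Prod.fst hh).symm
    rw [this]
    simp only [decide_eq_true_eq]
    omega

/-- Number of paths of `Q` starting at `v`. -/
def startsC (Q : Multiset (List V)) (v : V) : ℕ := Q.countP (fun p => p.head? = some v)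

/-- Number of paths of `Q` ending at `v`. -/
def endsC (Q : Multiset (List V)) (v : V) : ℕ := Q.countP (fun p => p.getLast? = some v)

lemma mult_cons (p : List V) (Q : Multiset (List V)) (e : V × V) :
    mult (p ::ₘ Q) e = mult Q e + (if e ∈ pathEdges p then 1 else 0) := by
  simp [mult, Multiset.countP_cons]

lemma startsC_cons (p : List V) (Q : Multiset (List V)) (v : V) :
    startsC (p ::ₘ Q) v = startsC Q v + (if p.head? = some v then 1 else 0) := by
  simp [startsC, Multiset.countP_cons]

lemma endsC_cons (p : List V) (Q : Multiset (List V)) (v : V) :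
    endsC (p ::ₘ Q) v = endsC Q v + (if p.getLast? = some v then 1 else 0) := by
  simp [endsC, Multiset.countP_cons]

lemma cover_balance [Fintype V] {Q : Multiset (List V)}
    (hQ : ∀ p ∈ Q, p ≠ [] ∧ p.Nodup) (v : V) :
    startsC Q v + ∑ u : V, mult Q (u, v) = endsC Q v + ∑ u : V, mult Q (v, u) := by
  induction Q using Multiset.induction with
  | empty => simp [startsC, endsC, mult]
  | cons p Q ih =>
    have hp := hQ p (Multiset.mem_cons_self _ _)
    have ihh := ih fun q hq => hQ q (Multiset.mem_cons_of_mem hq)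
    simp only [startsC_cons, endsC_cons, mult_cons, Finset.sum_add_distrib]
    have h1 := sum_ite_mem_snd (pathEdges p) (nodup_pathEdges hp.2) v
    have h2 := sum_ite_mem_fst (pathEdges p) (nodup_pathEdges hp.2) v
    have h3 := path_balance hp.1 v
    omega

lemma sum_startsC [Fintype V] {Q : Multiset (List V)} (hQ : ∀ p ∈ Q, p ≠ []) :
    ∑ v : V, startsC Q v = Multiset.card Q := by
  induction Q using Multiset.induction with
  | empty => simp [startsC]
  | cons p Q ih =>
    have hp := hQ p (Multiset.mem_cons_self _ _)
    simp only [startsC_cons, Finset.sum_add_distrib,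
      ih fun q hq => hQ q (Multiset.mem_cons_of_mem hq), Multiset.card_cons]
    congr 1
    rcases p with _ | ⟨a, l⟩
    · exact absurd rfl hp
    · simp

lemma exists_mem_of_startsC_pos {Q : Multiset (List V)} {v : V} (h : 0 < startsC Q v) :
    ∃ p ∈ Q, p.head? = some v := by
  simpa [decide_eq_true_eq] using Multiset.countP_pos.1 (by simpa [startsC] using h)

lemma exists_mem_of_mult_pos {Q : Multiset (List V)} {e : V × V} (h : 0 < mult Q e) :
    ∃ p ∈ Q, e ∈ pathEdges p := by
  simpa [decide_eq_true_eq] using Multiset.countP_pos.1 (by simpa [mult] using h)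

lemma mem_of_head? {p : List V} {v : V} (h : p.head? = some v) : v ∈ p := by
  cases p with
  | nil => simp at h
  | cons a l => simp at h; simp [h]

end Aux2

section Decomp
variable {V : Type*} [Fintype V] [DecidableEq V]

lemma head?_append_left {p : List V} (hp : p ≠ []) (l : List V) :
    (p ++ l).head? = p.head? := by
  cases p with
  | nil => exact absurd rfl hp
  | cons a t => rfl

lemma pathEdges_append_single {p : List V} {a : V} (h : p.getLast? = some a) (b : V) :
    pathEdges (p ++ [b]) = pathEdges p ++ [(a, b)] := by
  induction p with
  | nil => simp at h
  | cons x l ih =>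
    cases l with
    | nil =>
      simp only [List.getLast?_singleton, Option.some.injEq] at h
      subst h
      rfl
    | cons y l' =>
      rw [List.getLast?_cons_cons] at h
      show (x, y) :: pathEdges ((y :: l') ++ [b]) = ((x, y) :: pathEdges (y :: l')) ++ [(a, b)]
      rw [ih h]
      rfl

lemma countP_finset_sum {α β : Type*} (s : Finset α) (f : α → Multiset β)
    (pred : β → Prop) [DecidablePred pred] :
    Multiset.countP pred (∑ a ∈ s, f a) = ∑ a ∈ s, Multiset.countP pred (f a) := by
  classical
  induction s using Finset.induction_on with
  | empty => simp
  | insert a s hnot ih => simp [Finset.sum_insert hnot, ih]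

lemma card_finset_sum {α β : Type*} (s : Finset α) (f : α → Multiset β) :
    Multiset.card (∑ a ∈ s, f a) = ∑ a ∈ s, Multiset.card (f a) := by
  classical
  induction s using Finset.induction_on with
  | empty => simp
  | insert a s hnot ih => simp [Finset.sum_insert hnot, ih]

lemma countP_replicate {β : Type*} (n : ℕ) (x : β) (pred : β → Prop) [DecidablePred pred] :
    Multiset.countP pred (Multiset.replicate n x) = if pred x then n else 0 := by
  induction n with
  | zero => simp
  | succ k ih =>
    rw [Multiset.replicate_succ, Multiset.countP_cons, ih]
    by_cases h : pred x <;> simp [h]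

lemma decomp (E : Finset (V × V)) (hdag : IsDAG (edgeRel E)) :
    ∀ (N : ℕ) (m : V × V → ℕ) (s e : V → ℕ),
      (∑ x : V × V, m x) = N →
      (∀ x, m x ≠ 0 → x ∈ E) →
      (∀ v, s v + ∑ u : V, m (u, v) = e v + ∑ u : V, m (v, u)) →
      ∃ Q : Multiset (List V),
        (∀ p ∈ Q, IsPathOn (edgeRel E) p) ∧
        Multiset.card Q = ∑ v : V, s v ∧
        (∀ x, mult Q x = m x) ∧ (∀ v, startsC Q v = s v) ∧ (∀ v, endsC Q v = e v) := by
  intro N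
  induction N using Nat.strong_induction_on with
  | _ N ih =>
    intro m s e hsum hsupp hcons
    rcases Nat.eq_zero_or_pos N with hN0 | hNpos
    · -- base case : no edges at all
      subst hN0
      have hm0 : ∀ x, m x = 0 := by
        intro x
        exact (Finset.sum_eq_zero_iff.1 hsum) x (Finset.mem_univ x)
      have hse : ∀ v, s v = e v := by
        intro v
        have := hcons v
        simp [hm0] at this
        exact this
      refine ⟨∑ v : V, Multiset.replicate (s v) [v], ?_, ?_, ?_, ?_, ?_⟩
      · intro p hp
        rw [Multiset.mem_sum] at hp
        obtain ⟨v, -, hv⟩ := hp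
        rw [Multiset.eq_of_mem_replicate hv]
        exact ⟨by simp, List.isChain_singleton _, by simp⟩
      · rw [card_finset_sum]
        simp
      · intro x
        rw [mult, countP_finset_sum]
        rw [hm0 x]
        apply Finset.sum_eq_zero
        intro v _
        rw [countP_replicate]
        simp [pathEdges]
      · intro v
        rw [startsC, countP_finset_sum]
        have h1 : ∀ w : V, Multiset.countP (fun p : List V => p.head? = some v)
            (Multiset.replicate (s w) [w]) = if w = v then s w else 0 := by
          intro w
          rw [countP_replicate]
          simp
        rw [Finset.sum_congr rfl fun w _ => h1 w, Finset.sum_ite_eq' Finset.univ v s]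
        simp
      · intro v
        rw [endsC, countP_finset_sum]
        have h1 : ∀ w : V, Multiset.countP (fun p : List V => p.getLast? = some v)
            (Multiset.replicate (s w) [w]) = if w = v then s w else 0 := by
          intro w
          rw [countP_replicate]
          simp
        rw [Finset.sum_congr rfl fun w _ => h1 w, Finset.sum_ite_eq' Finset.univ v s]
        simp [hse v]
    · -- step case
      have hx : ∃ x : V × V, m x ≠ 0 := by
        by_contra h
        push_neg at h
        rw [Finset.sum_eq_zero fun x _ => h x] at hsum
        omega
      set R' : V → V → Prop := fun x y => m (x, y) ≠ 0 with hR'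
      have hirrefl : ∀ x, ¬ Relation.TransGen R' x x := by
        intro x h
        exact hdag x (Relation.TransGen.mono (fun u w hh => hsupp (u, w) hh) x x h)
      have hwf : WellFounded (fun x y : V => Relation.TransGen R' y x) := by
        have h1 : IsTrans V (fun x y => Relation.TransGen R' y x) :=
          ⟨fun a b c hab hbc => Relation.TransGen.trans hbc hab⟩
        have h2 : IsIrrefl V (fun x y => Relation.TransGen R' y x) := ⟨fun a h => hirrefl a h⟩
        exact Finite.wellFounded_of_trans_of_irrefl _
      have hBne : {b : V | ∃ a, m (a, b) ≠ 0}.Nonempty := by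
        obtain ⟨⟨a, b⟩, hab⟩ := hx
        exact ⟨b, a, hab⟩
      obtain ⟨b, hbB, hbmin⟩ := hwf.has_min _ hBne
      obtain ⟨a, hab⟩ := hbB
      have hout0 : ∀ c, m (b, c) = 0 := by
        intro c
        by_contra hc
        exact hbmin c ⟨b, hc⟩ (Relation.TransGen.single hc)
      have habE : (a, b) ∈ E := hsupp _ hab
      have hne_ab : a ≠ b := by
        rintro rfl
        exact hdag a (Relation.TransGen.single habE)
      have hmab_pos : 0 < m (a, b) := Nat.pos_of_ne_zero hab
      have hin_pos : 0 < ∑ u : V, m (u, b) :=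
        lt_of_lt_of_le hmab_pos (Finset.single_le_sum (f := fun u => m (u, b))
          (fun _ _ => Nat.zero_le _) (Finset.mem_univ a))
      have hout_zero : ∑ u : V, m (b, u) = 0 := Finset.sum_eq_zero fun u _ => hout0 u
      have heb_pos : 0 < e b := by
        have hc := hcons b
        omega
      set m₂ : V × V → ℕ := Function.update m (a, b) (m (a, b) - 1) with hm₂
      set e₂ : V → ℕ := fun v => if v = b then e v - 1 else if v = a then e v + 1 else e v with he₂
      have hm₂ab : m₂ (a, b) = m (a, b) - 1 := Function.update_self _ _ _
      have hm₂ne : ∀ x, x ≠ (a, b) → m₂ x = m x := fun x hx => Function.update_of_ne hx _ _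
      have he₂b : e₂ b = e b - 1 := by simp [he₂]
      have he₂a : e₂ a = e a + 1 := by simp [he₂, hne_ab]
      have he₂o : ∀ v, v ≠ b → v ≠ a → e₂ v = e v := by
        intro v h1 h2
        simp [he₂, h1, h2]
      have hsum₂ : ∑ x : V × V, m₂ x + 1 = N := by
        have h1 := Finset.add_sum_erase Finset.univ m₂ (Finset.mem_univ (a, b))
        have h2 := Finset.add_sum_erase Finset.univ m (Finset.mem_univ (a, b))
        have h3 : ∑ x ∈ Finset.univ.erase (a, b), m₂ x = ∑ x ∈ Finset.univ.erase (a, b), m x :=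
          Finset.sum_congr rfl fun x hx => hm₂ne x (Finset.ne_of_mem_erase hx)
        rw [h3] at h1
        omega
      have hsupp₂ : ∀ x, m₂ x ≠ 0 → x ∈ E := by
        intro x hx2
        by_cases h : x = (a, b)
        · subst h; exact habE
        · rw [hm₂ne x h] at hx2; exact hsupp x hx2
      have hin₂ : ∀ v, v ≠ b → ∑ u : V, m₂ (u, v) = ∑ u : V, m (u, v) :=
        fun v hv => Finset.sum_congr rfl fun u _ =>
          hm₂ne _ (fun h => hv (congrArg Prod.snd h))
      have hout₂ : ∀ v, v ≠ a → ∑ u : V, m₂ (v, u) = ∑ u : V, m (v, u) :=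
        fun v hv => Finset.sum_congr rfl fun u _ =>
          hm₂ne _ (fun h => hv (congrArg Prod.fst h))
      have hinb₂ : ∑ u : V, m₂ (u, b) + 1 = ∑ u : V, m (u, b) := by
        have h1 : m₂ (a, b) + ∑ u ∈ Finset.univ.erase a, m₂ (u, b) = ∑ u : V, m₂ (u, b) :=
          Finset.add_sum_erase Finset.univ (fun u => m₂ (u, b)) (Finset.mem_univ a)
        have h2 : m (a, b) + ∑ u ∈ Finset.univ.erase a, m (u, b) = ∑ u : V, m (u, b) :=
          Finset.add_sum_erase Finset.univ (fun u => m (u, b)) (Finset.mem_univ a)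
        have h3 : ∑ u ∈ Finset.univ.erase a, m₂ (u, b) = ∑ u ∈ Finset.univ.erase a, m (u, b) :=
          Finset.sum_congr rfl fun u hu =>
            hm₂ne (u, b) fun h => Finset.ne_of_mem_erase hu (congrArg Prod.fst h)
        rw [h3] at h1
        omega
      have houta₂ : ∑ u : V, m₂ (a, u) + 1 = ∑ u : V, m (a, u) := by
        have h1 : m₂ (a, b) + ∑ u ∈ Finset.univ.erase b, m₂ (a, u) = ∑ u : V, m₂ (a, u) :=
          Finset.add_sum_erase Finset.univ (fun u => m₂ (a, u)) (Finset.mem_univ b)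
        have h2 : m (a, b) + ∑ u ∈ Finset.univ.erase b, m (a, u) = ∑ u : V, m (a, u) :=
          Finset.add_sum_erase Finset.univ (fun u => m (a, u)) (Finset.mem_univ b)
        have h3 : ∑ u ∈ Finset.univ.erase b, m₂ (a, u) = ∑ u ∈ Finset.univ.erase b, m (a, u) :=
          Finset.sum_congr rfl fun u hu =>
            hm₂ne (a, u) fun h => Finset.ne_of_mem_erase hu (congrArg Prod.snd h)
        rw [h3] at h1
        omega
      have hcons₂ : ∀ v, s v + ∑ u : V, m₂ (u, v) = e₂ v + ∑ u : V, m₂ (v, u) := by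
        intro v
        have hc := hcons v
        by_cases hvb : v = b
        · have h1 : ∑ u : V, m₂ (v, u) = ∑ u : V, m (v, u) :=
            hout₂ v (by rw [hvb]; exact Ne.symm hne_ab)
          have h2 : e₂ v = e v - 1 := by rw [hvb]; exact he₂b
          have h3 : ∑ u : V, m₂ (u, v) + 1 = ∑ u : V, m (u, v) := by rw [hvb]; exact hinb₂
          have h4 : 0 < e v := by rw [hvb]; exact heb_pos
          have h5 : ∑ u : V, m (v, u) = 0 := by rw [hvb]; exact hout_zero
          omega
        · by_cases hva : v = a
          · have h1 : ∑ u : V, m₂ (u, v) = ∑ u : V, m (u, v) := hin₂ v hvb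
            have h2 : e₂ v = e v + 1 := by rw [hva]; exact he₂a
            have h3 : ∑ u : V, m₂ (v, u) + 1 = ∑ u : V, m (v, u) := by rw [hva]; exact houta₂
            omega
          · have h1 : ∑ u : V, m₂ (u, v) = ∑ u : V, m (u, v) := hin₂ v hvb
            have h2 : ∑ u : V, m₂ (v, u) = ∑ u : V, m (v, u) := hout₂ v hva
            have h3 := he₂o v hvb hva
            omega
      obtain ⟨Q₂, hQ₂path, hQ₂card, hQ₂mult, hQ₂starts, hQ₂ends⟩ :=
        ih (∑ x : V × V, m₂ x) (by omega) m₂ s e₂ rfl hsupp₂ hcons₂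
      have hea : 0 < endsC Q₂ a := by
        have := hQ₂ends a
        omega
      obtain ⟨p, hpQ, hplast⟩ : ∃ p ∈ Q₂, p.getLast? = some a := by
        have := Multiset.countP_pos.1 (by simpa [endsC] using hea)
        simpa [decide_eq_true_eq] using this
      obtain ⟨hpne, hpchain, hpnodup⟩ := hQ₂path p hpQ
      have hbnotp : b ∉ p := by
        intro hb
        have hrt := chain'_reflTransGen_getLast hpchain hplast b hb
        exact hdag b (Relation.TransGen.tail' hrt habE)
      set q : List V := p ++ [b] with hq
      have hqpath : IsPathOn (edgeRel E) q := by
        refine ⟨by simp [hq], ?_, ?_⟩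
        · rw [hq]
          apply List.IsChain.append hpchain (List.isChain_singleton b)
          intro x hx y hy
          simp only [List.head?_cons, Option.mem_def, Option.some.injEq] at hy
          rw [Option.mem_def, hplast, Option.some.injEq] at hx
          subst hx; subst hy
          exact habE
        · rw [hq, List.nodup_append]
          exact ⟨hpnodup, List.nodup_singleton b, fun x hx y hy => by
            simp only [List.mem_singleton] at hy
            subst hy
            intro hxy
            subst hxy
            exact hbnotp hx⟩
      have hqedges : pathEdges q = pathEdges p ++ [(a, b)] := pathEdges_append_single hplast b
      have habnotp : (a, b) ∉ pathEdges p := by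
        intro h
        exact hbnotp (List.mem_of_mem_tail (mem_of_mem_pathEdges h).2)
      have hqhead : q.head? = p.head? := head?_append_left hpne _
      have hqlast : q.getLast? = some b := by
        rw [hq, List.getLast?_concat]
      refine ⟨q ::ₘ Q₂.erase p, ?_, ?_, ?_, ?_, ?_⟩
      · intro r hr
        rcases Multiset.mem_cons.1 hr with rfl | hr
        · exact hqpath
        · exact hQ₂path r (Multiset.mem_of_mem_erase hr)
      · rw [Multiset.card_cons, Multiset.card_erase_of_mem hpQ, Nat.pred_eq_sub_one, hQ₂card]
        have h0 : 0 < ∑ v : V, s v := by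
          rw [← hQ₂card]
          exact Multiset.card_pos.2 fun h => by simp [h] at hpQ
        omega
      · intro x
        have hsplit : mult Q₂ x = mult (Q₂.erase p) x + (if x ∈ pathEdges p then 1 else 0) := by
          conv_lhs => rw [← Multiset.cons_erase hpQ]
          rw [mult_cons]
        rw [mult_cons]
        have hmem : (x ∈ pathEdges q) ↔ (x ∈ pathEdges p ∨ x = (a, b)) := by
          rw [hqedges]; simp
        by_cases hxab : x = (a, b)
        · subst hxab
          rw [if_pos (hmem.2 (Or.inr rfl)), if_neg habnotp] at *
          have h3 : mult Q₂ (a, b) = m (a, b) - 1 := by rw [hQ₂mult, hm₂ab]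
          omega
        · have hiff : (x ∈ pathEdges q) ↔ (x ∈ pathEdges p) := by
            rw [hmem]; simp [hxab]
          rw [if_congr hiff rfl rfl]
          have h3 : mult Q₂ x = m x := by rw [hQ₂mult, hm₂ne x hxab]
          omega
      · intro v
        have hsplit : startsC Q₂ v = startsC (Q₂.erase p) v
            + (if p.head? = some v then 1 else 0) := by
          conv_lhs => rw [← Multiset.cons_erase hpQ]
          rw [startsC_cons]
        rw [startsC_cons, hqhead]
        have h3 := hQ₂starts v
        omega
      · intro v
        have hsplit : endsC Q₂ v = endsC (Q₂.erase p) v + (if a = v then 1 else 0) := by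
          conv_lhs => rw [← Multiset.cons_erase hpQ]
          rw [endsC_cons, hplast]
          simp only [Option.some.injEq]
        rw [endsC_cons, hqlast]
        simp only [Option.some.injEq]
        have hv := hQ₂ends v
        by_cases hvb : v = b
        · have h4 : e₂ v = e v - 1 := by rw [hvb]; exact he₂b
          have h5 : 0 < e v := by rw [hvb]; exact heb_pos
          rw [if_neg (fun h : a = v => hne_ab (h.trans hvb))] at hsplit
          rw [if_pos hvb.symm]
          omega
        · by_cases hva : v = a
          · have h4 : e₂ v = e v + 1 := by rw [hva]; exact he₂a
            rw [if_pos hva.symm] at hsplit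
            rw [if_neg (fun h : b = v => hvb h.symm)]
            omega
          · have h4 := he₂o v hvb hva
            rw [if_neg (fun h => hva h.symm)] at hsplit
            rw [if_neg (fun h => hvb h.symm)]
            omega

end Decomp

section Cycle
open SimpleGraph

lemma components_card_add_edges_le {W : Type*} [Fintype W] :
    ∀ (n : ℕ) (G : SimpleGraph W), Nat.card G.edgeSet = n → G.IsAcyclic →
      Nat.card G.ConnectedComponent + n ≤ Fintype.card W := by
  classical
  intro n
  induction n using Nat.strong_induction_on with
  | _ n ih =>
    intro G hn hG
    rcases Nat.eq_zero_or_pos n with h0 | hpos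
    · subst h0
      have hsurj : Function.Surjective (G.connectedComponentMk) := fun c => c.exists_rep
      have h1 : Nat.card G.ConnectedComponent ≤ Nat.card W :=
        Nat.card_le_card_of_surjective _ hsurj
      rw [Nat.card_eq_fintype_card (α := W)] at h1
      omega
    · have hne : Nonempty G.edgeSet := by
        rcases Nat.card_pos_iff.mp (hn ▸ hpos) with ⟨h1, _⟩
        exact h1
      have hadj : ∃ u v, G.Adj u v := by
        obtain ⟨e, he⟩ := hne
        induction e using Sym2.ind with
        | _ u v => exact ⟨u, v, (G.mem_edgeSet).1 he⟩
      obtain ⟨u, v, huv⟩ := hadj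
      set G' : SimpleGraph W := G.deleteEdges {s(u, v)} with hG'def
      have hle : G' ≤ G := by
        rw [hG'def, deleteEdges]
        exact sdiff_le
      have hG'ac : G'.IsAcyclic := by
        intro w c hc
        exact hG (c.mapLe hle) (hc.mapLe hle)
      have hedges : G'.edgeSet = G.edgeSet \ {s(u, v)} := by
        rw [hG'def, edgeSet_deleteEdges]
      have hcard' : Nat.card G'.edgeSet = n - 1 := by
        rw [Nat.card_coe_set_eq, hedges,
          Set.ncard_diff_singleton_of_mem ((G.mem_edgeSet).2 huv),
          ← Nat.card_coe_set_eq, hn]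
      have hIH := ih (n - 1) (by omega) G' hcard' hG'ac
      -- component surjection
      set φ : G'.ConnectedComponent → G.ConnectedComponent :=
        ConnectedComponent.map (Hom.ofLE hle) with hφdef
      have hsurj : Function.Surjective φ := by
        intro c
        obtain ⟨w, rfl⟩ := c.exists_rep
        exact ⟨G'.connectedComponentMk w, rfl⟩
      have hninj : ¬ Function.Injective φ := by
        intro hinj
        have h1 : φ (G'.connectedComponentMk u) = φ (G'.connectedComponentMk v) := by
          rw [hφdef]
          simp only [ConnectedComponent.map_mk]
          exact ConnectedComponent.sound huv.reachable
        have h2 := hinj h1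
        have h3 : G'.Reachable u v := ConnectedComponent.exact h2
        have hbridge := (isAcyclic_iff_forall_adj_isBridge.1 hG) huv
        rw [isBridge_iff] at hbridge
        exact hbridge h3
      have hfin1 : Fintype G'.ConnectedComponent := Fintype.ofFinite _
      have hfin2 : Fintype G.ConnectedComponent := Fintype.ofFinite _
      have hlt : Fintype.card G.ConnectedComponent < Fintype.card G'.ConnectedComponent :=
        Fintype.card_lt_of_surjective_not_injective φ hsurj hninj
      rw [Nat.card_eq_fintype_card] at hIH ⊢
      omega

lemma exists_cycle_of_many_edges {W : Type*} [Fintype W] [Nonempty W] (G : SimpleGraph W)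
    (h : Fintype.card W ≤ Nat.card G.edgeSet) :
    ∃ (x : W) (c : G.Walk x x), c.IsCycle := by
  by_contra hcon
  push_neg at hcon
  have hG : G.IsAcyclic := fun v c hc => hcon v c hc
  have := components_card_add_edges_le _ G rfl hG
  have hfin : Finite G.ConnectedComponent :=
    Finite.of_surjective G.connectedComponentMk fun c => c.exists_rep
  have hpos : 0 < Nat.card G.ConnectedComponent :=
    Nat.card_pos_iff.2 ⟨⟨G.connectedComponentMk (Classical.arbitrary W)⟩, hfin⟩
  omega

end Cycle

section Extract
open SimpleGraph

lemma list_card_filter_toFinset {α : Type*} [DecidableEq α] (l : List α) (hl : l.Nodup)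
    (p : α → Prop) [DecidablePred p] :
    (l.toFinset.filter p).card = l.countP (fun x => p x) := by
  have h1 : (l.filter (fun x => decide (p x))).toFinset = l.toFinset.filter p := by
    ext a
    simp [List.mem_filter]
  rw [← h1, List.toFinset_card_of_nodup (hl.filter _), List.countP_eq_length_filter]

lemma walk_dart_flux {W : Type*} [DecidableEq W] {G : SimpleGraph W} {x y : W}
    (w : G.Walk x y) (z : W) :
    w.darts.countP (fun d => d.fst = z) + (if z = y then 1 else 0)
      = w.darts.countP (fun d => d.snd = z) + (if z = x then 1 else 0) := by
  induction w with
  | nil => simp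
  | @cons a b c hadj p ih =>
    rw [Walk.darts_cons, List.countP_cons, List.countP_cons]
    simp only [decide_eq_true_eq] at *
    by_cases h1 : z = a <;> by_cases h2 : z = b <;>
      simp only [h1, h2, if_pos, if_neg, eq_comm, if_true, if_false, eq_self_iff_true,
        not_false_iff] at * <;>
      split_ifs at * <;> omega

lemma exists_alternating_cycle {V : Type*} [Fintype V] [DecidableEq V] [Nonempty V]
    (S : Finset (V × V)) (hS : 2 * Fintype.card V ≤ S.card) :
    ∃ O R : Finset (V × V), O ⊆ S ∧ R ⊆ S ∧ Disjoint O R ∧ O.Nonempty ∧ R.Nonempty ∧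
      (∀ v, (O.filter (fun x => x.2 = v)).card = (R.filter (fun x => x.2 = v)).card) ∧
      (∀ v, (O.filter (fun x => x.1 = v)).card = (R.filter (fun x => x.1 = v)).card) := by
  classical
  set G : SimpleGraph (V ⊕ V) :=
    { Adj := fun x y => ∃ a b, (a, b) ∈ S ∧
        ((x = Sum.inl a ∧ y = Sum.inr b) ∨ (x = Sum.inr b ∧ y = Sum.inl a))
      symm := ⟨by
        rintro x y ⟨a, b, hab, (⟨rfl, rfl⟩ | ⟨rfl, rfl⟩)⟩
        · exact ⟨a, b, hab, Or.inr ⟨rfl, rfl⟩⟩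
        · exact ⟨a, b, hab, Or.inl ⟨rfl, rfl⟩⟩⟩
      loopless := ⟨by
        rintro x ⟨a, b, hab, (⟨rfl, h⟩ | ⟨rfl, h⟩)⟩ <;> simp at h⟩ } with hGdef
  -- many edges
  have hGadj : ∀ {x y}, G.Adj x y → ∃ a b, (a, b) ∈ S ∧
      ((x = Sum.inl a ∧ y = Sum.inr b) ∨ (x = Sum.inr b ∧ y = Sum.inl a)) := fun h => h
  have hedgecard : Fintype.card (V ⊕ V) ≤ Nat.card G.edgeSet := by
    have hinj : Set.InjOn (fun x : V × V => s(Sum.inl x.1, (Sum.inr x.2 : V ⊕ V))) ↑S := by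
      intro x _ y _ hxy
      simp only [Sym2.eq_iff] at hxy
      rcases hxy with ⟨h1, h2⟩ | ⟨h1, h2⟩
      · exact Prod.ext (Sum.inl_injective h1) (Sum.inr_injective h2)
      · exact absurd h1 (by simp)
    have hmaps : ∀ x ∈ (↑S : Set (V × V)),
        s(Sum.inl x.1, (Sum.inr x.2 : V ⊕ V)) ∈ G.edgeSet := by
      intro x hx
      rw [mem_edgeSet]
      exact ⟨x.1, x.2, by simpa using hx, Or.inl ⟨rfl, rfl⟩⟩
    have := Set.ncard_le_ncard_of_injOn _ hmaps hinj (Set.toFinite _)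
    rw [Set.ncard_coe_finset] at this
    rw [Nat.card_coe_set_eq, Fintype.card_sum]
    omega
  obtain ⟨x, c, hc⟩ := exists_cycle_of_many_edges G hedgecard
  -- darts and their structure
  have hdartsnodup : c.darts.Nodup := List.Nodup.of_map _ hc.edges_nodup
  set g : G.Dart → V × V := fun d =>
    match d.fst, d.snd with
    | Sum.inl a, Sum.inr b => (a, b)
    | Sum.inr b, Sum.inl a => (a, b)
    | Sum.inl a, Sum.inl _ => (a, a)
    | Sum.inr b, Sum.inr _ => (b, b) with hgdef
  have hdart : ∀ d : G.Dart,
      (∃ a b, (a, b) ∈ S ∧ d.fst = Sum.inl a ∧ d.snd = Sum.inr b ∧ g d = (a, b)) ∨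
      (∃ a b, (a, b) ∈ S ∧ d.fst = Sum.inr b ∧ d.snd = Sum.inl a ∧ g d = (a, b)) := by
    intro d
    obtain ⟨a, b, hab, (⟨h1, h2⟩ | ⟨h1, h2⟩)⟩ := hGadj d.adj
    · left
      refine ⟨a, b, hab, h1, h2, ?_⟩
      simp only [hgdef, h1, h2]
    · right
      refine ⟨a, b, hab, h1, h2, ?_⟩
      simp only [hgdef, h1, h2]
  set OL : List (V × V) := (c.darts.filter (fun d => (d.fst).isLeft)).map g with hOLdef
  set RL : List (V × V) := (c.darts.filter (fun d => (d.fst).isRight)).map g with hRLdef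
  -- membership characterizations
  have hOLmem : ∀ {e : V × V}, e ∈ OL →
      e ∈ S ∧ ∃ d ∈ c.darts, d.fst = Sum.inl e.1 ∧ d.snd = Sum.inr e.2 := by
    intro e he
    obtain ⟨d, hd, rfl⟩ := List.mem_map.1 he
    have hd' := List.mem_filter.1 hd
    rcases hdart d with ⟨a, b, hab, h1, h2, h3⟩ | ⟨a, b, hab, h1, h2, h3⟩
    · rw [h3]
      exact ⟨hab, d, hd'.1, h1, h2⟩
    · rw [h1] at hd'
      simp at hd'
  have hRLmem : ∀ {e : V × V}, e ∈ RL →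
      e ∈ S ∧ ∃ d ∈ c.darts, d.fst = Sum.inr e.2 ∧ d.snd = Sum.inl e.1 := by
    intro e he
    obtain ⟨d, hd, rfl⟩ := List.mem_map.1 he
    have hd' := List.mem_filter.1 hd
    rcases hdart d with ⟨a, b, hab, h1, h2, h3⟩ | ⟨a, b, hab, h1, h2, h3⟩
    · rw [h1] at hd'
      simp at hd'
    · rw [h3]
      exact ⟨hab, d, hd'.1, h1, h2⟩
  -- nodup
  have hOLnodup : OL.Nodup := by
    refine List.Nodup.map_on ?_ (hdartsnodup.filter _)
    intro d hd d' hd' hgg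
    have hLd : (d.toProd.1).isLeft = true := by simpa using (List.mem_filter.1 hd).2
    have hLd' : (d'.toProd.1).isLeft = true := by simpa using (List.mem_filter.1 hd').2
    rcases hdart d with ⟨a, b, hab, h1, h2, h3⟩ | ⟨a, b, hab, h1, h2, h3⟩
    · rcases hdart d' with ⟨a', b', hab', h1', h2', h3'⟩ | ⟨a', b', hab', h1', h2', h3'⟩
      · rw [h3, h3'] at hgg
        simp only [Prod.mk.injEq] at hgg
        apply Dart.ext
        apply Prod.ext
        · rw [h1, h1', hgg.1]
        · rw [h2, h2', hgg.2]
      · rw [h1'] at hLd'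
        simp at hLd'
    · rw [h1] at hLd
      simp at hLd
  have hRLnodup : RL.Nodup := by
    refine List.Nodup.map_on ?_ (hdartsnodup.filter _)
    intro d hd d' hd' hgg
    have hLd : (d.toProd.1).isRight = true := by simpa using (List.mem_filter.1 hd).2
    have hLd' : (d'.toProd.1).isRight = true := by simpa using (List.mem_filter.1 hd').2
    rcases hdart d with ⟨a, b, hab, h1, h2, h3⟩ | ⟨a, b, hab, h1, h2, h3⟩
    · rw [h1] at hLd
      simp at hLd
    · rcases hdart d' with ⟨a', b', hab', h1', h2', h3'⟩ | ⟨a', b', hab', h1', h2', h3'⟩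
      · rw [h1'] at hLd'
        simp at hLd'
      · rw [h3, h3'] at hgg
        simp only [Prod.mk.injEq] at hgg
        apply Dart.ext
        apply Prod.ext
        · rw [h1, h1', hgg.2]
        · rw [h2, h2', hgg.1]
  -- counting: list counts equal dart counts
  have hcountO2 : ∀ v : V, OL.countP (fun e => e.2 = v)
      = c.darts.countP (fun d => d.snd = Sum.inr v) := by
    intro v
    rw [hOLdef, List.countP_map, List.countP_filter]
    apply List.countP_congr
    intro d _
    rcases hdart d with ⟨a, b, hab, h1, h2, h3⟩ | ⟨a, b, hab, h1, h2, h3⟩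
    · simp [Function.comp, h3, h1, h2]
    · simp [Function.comp, h3, h1, h2]
  have hcountR2 : ∀ v : V, RL.countP (fun e => e.2 = v)
      = c.darts.countP (fun d => d.fst = Sum.inr v) := by
    intro v
    rw [hRLdef, List.countP_map, List.countP_filter]
    apply List.countP_congr
    intro d _
    rcases hdart d with ⟨a, b, hab, h1, h2, h3⟩ | ⟨a, b, hab, h1, h2, h3⟩
    · simp [Function.comp, h3, h1, h2]
    · simp [Function.comp, h3, h1, h2]
  have hcountO1 : ∀ v : V, OL.countP (fun e => e.1 = v)
      = c.darts.countP (fun d => d.fst = Sum.inl v) := by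
    intro v
    rw [hOLdef, List.countP_map, List.countP_filter]
    apply List.countP_congr
    intro d _
    rcases hdart d with ⟨a, b, hab, h1, h2, h3⟩ | ⟨a, b, hab, h1, h2, h3⟩
    · simp [Function.comp, h3, h1, h2]
    · simp [Function.comp, h3, h1, h2]
  have hcountR1 : ∀ v : V, RL.countP (fun e => e.1 = v)
      = c.darts.countP (fun d => d.snd = Sum.inl v) := by
    intro v
    rw [hRLdef, List.countP_map, List.countP_filter]
    apply List.countP_congr
    intro d _
    rcases hdart d with ⟨a, b, hab, h1, h2, h3⟩ | ⟨a, b, hab, h1, h2, h3⟩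
    · simp [Function.comp, h3, h1, h2]
    · simp [Function.comp, h3, h1, h2]
  have hflux : ∀ z : V ⊕ V, c.darts.countP (fun d => d.fst = z)
      = c.darts.countP (fun d => d.snd = z) := by
    intro z
    have := walk_dart_flux c z
    omega
  -- the finsets
  refine ⟨OL.toFinset, RL.toFinset, ?_, ?_, ?_, ?_, ?_, ?_, ?_⟩
  · intro e he
    exact (hOLmem (List.mem_toFinset.1 he)).1
  · intro e he
    exact (hRLmem (List.mem_toFinset.1 he)).1
  · rw [Finset.disjoint_left]
    intro e heO heR
    obtain ⟨-, d, hd, hfst, hsnd⟩ := hOLmem (List.mem_toFinset.1 heO)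
    obtain ⟨-, d', hd', hfst', hsnd'⟩ := hRLmem (List.mem_toFinset.1 heR)
    have hedge : d.edge = d'.edge := by
      rw [Dart.edge, Dart.edge]
      have h1 : d.toProd = (Sum.inl e.1, Sum.inr e.2) := Prod.ext hfst hsnd
      have h2 : d'.toProd = (Sum.inr e.2, Sum.inl e.1) := Prod.ext hfst' hsnd'
      rw [h1, h2]
      exact Sym2.eq_swap
    have : d = d' := List.inj_on_of_nodup_map hc.edges_nodup hd hd' hedge
    rw [this] at hfst
    rw [hfst'] at hfst
    simp at hfst
  all_goals {
    have hOR : OL ≠ [] ∨ RL ≠ [] := by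
      have hlen : c.darts ≠ [] := by
        have h3 := hc.three_le_length
        intro hnil
        rw [← Walk.length_darts, hnil] at h3
        simp at h3
      obtain ⟨d, hd⟩ := List.exists_mem_of_ne_nil _ hlen
      rcases hdart d with ⟨a, b, hab, h1, h2, h3⟩ | ⟨a, b, hab, h1, h2, h3⟩
      · left
        intro hnil
        have : g d ∈ OL := List.mem_map_of_mem (f := g) (List.mem_filter.2 ⟨hd, by rw [h1]; rfl⟩)
        rw [hnil] at this
        simp at this
      · right
        intro hnil
        have : g d ∈ RL := List.mem_map_of_mem (f := g) (List.mem_filter.2 ⟨hd, by rw [h1]; rfl⟩)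
        rw [hnil] at this
        simp at this
    have hbal2 : ∀ v, ((OL.toFinset).filter (fun x => x.2 = v)).card
        = ((RL.toFinset).filter (fun x => x.2 = v)).card := by
      intro v
      rw [list_card_filter_toFinset _ hOLnodup, list_card_filter_toFinset _ hRLnodup,
        hcountO2 v, hcountR2 v, hflux (Sum.inr v)]
    have hbal1 : ∀ v, ((OL.toFinset).filter (fun x => x.1 = v)).card
        = ((RL.toFinset).filter (fun x => x.1 = v)).card := by
      intro v
      rw [list_card_filter_toFinset _ hOLnodup, list_card_filter_toFinset _ hRLnodup,
        hcountO1 v, hcountR1 v, hflux (Sum.inl v)]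
    have hcards : (OL.toFinset).card = (RL.toFinset).card := by
      rw [Finset.card_eq_sum_card_fiberwise (f := Prod.snd) (t := Finset.univ)
          (fun x _ => Finset.mem_univ _),
        Finset.card_eq_sum_card_fiberwise (f := Prod.snd) (t := Finset.univ)
          (fun x _ => Finset.mem_univ _)]
      exact Finset.sum_congr rfl fun v _ => hbal2 v
    have hne : (OL.toFinset).Nonempty ∧ (RL.toFinset).Nonempty := by
      rcases hOR with h | h
      · have h1 : (OL.toFinset).Nonempty := by
          obtain ⟨e, he⟩ := List.exists_mem_of_ne_nil _ h
          exact ⟨e, List.mem_toFinset.2 he⟩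
        exact ⟨h1, Finset.card_pos.1 (hcards ▸ Finset.card_pos.2 h1)⟩
      · have h1 : (RL.toFinset).Nonempty := by
          obtain ⟨e, he⟩ := List.exists_mem_of_ne_nil _ h
          exact ⟨e, List.mem_toFinset.2 he⟩
        exact ⟨Finset.card_pos.1 (hcards.symm ▸ Finset.card_pos.2 h1), h1⟩
    first
      | exact hne.1
      | exact hne.2
      | exact hbal2
      | exact hbal1
  }

end Extract

section Modify
variable {V : Type*} [Fintype V] [DecidableEq V]

lemma card_fiber_snd (R : Finset (V × V)) (v : V) :
    (Finset.univ.filter (fun u : V => (u, v) ∈ R)).card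
      = (R.filter (fun x => x.2 = v)).card := by
  apply Finset.card_bij (fun u _ => (u, v))
  · intro u hu
    rw [Finset.mem_filter] at hu ⊢
    exact ⟨hu.2, rfl⟩
  · intro u _ u' _ h
    exact congrArg Prod.fst h
  · intro x hx
    rw [Finset.mem_filter] at hx
    refine ⟨x.1, Finset.mem_filter.2 ⟨Finset.mem_univ _, ?_⟩, ?_⟩
    · rw [show ((x.1 : V), v) = x from Prod.ext rfl hx.2.symm]
      exact hx.1
    · exact (Prod.ext rfl hx.2.symm)

lemma card_fiber_fst (R : Finset (V × V)) (v : V) :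
    (Finset.univ.filter (fun u : V => (v, u) ∈ R)).card
      = (R.filter (fun x => x.1 = v)).card := by
  apply Finset.card_bij (fun u _ => (v, u))
  · intro u hu
    rw [Finset.mem_filter] at hu ⊢
    exact ⟨hu.2, rfl⟩
  · intro u _ u' _ h
    exact congrArg Prod.snd h
  · intro x hx
    rw [Finset.mem_filter] at hx
    refine ⟨x.2, Finset.mem_filter.2 ⟨Finset.mem_univ _, ?_⟩, ?_⟩
    · rw [show ((v : V), x.2) = x from Prod.ext hx.2.symm rfl]
      exact hx.1
    · exact (Prod.ext hx.2.symm rfl)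

lemma sum_boole_int {α : Type*} [Fintype α] (P : α → Prop) [DecidablePred P] :
    ∑ u : α, (if P u then (1 : ℤ) else 0) = ((Finset.univ.filter P).card : ℤ) := by
  simp [Finset.sum_boole]

/-- Given a path cover `Q` and an "alternating cycle" `(O, R)` in its support,
produce a new path cover with multiplicities decremented on `O`, incremented on `R`. -/
lemma modified_cover (E : Finset (V × V)) (hdag : IsDAG (edgeRel E))
    {Q : Multiset (List V)} (hQcover : IsPathCover (edgeRel E) Q)
    {O R : Finset (V × V)}
    (hOpos : ∀ e ∈ O, 0 < mult Q e) (hRE : ∀ e ∈ R, e ∈ E) (hdisj : Disjoint O R)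
    (hbal2 : ∀ v, (O.filter (fun x => x.2 = v)).card = (R.filter (fun x => x.2 = v)).card)
    (hbal1 : ∀ v, (O.filter (fun x => x.1 = v)).card = (R.filter (fun x => x.1 = v)).card) :
    ∃ Q' : Multiset (List V), IsPathCover (edgeRel E) Q' ∧
      Multiset.card Q' = Multiset.card Q ∧
      (∀ e, mult Q' e = (if e ∈ O then mult Q e - 1
        else if e ∈ R then mult Q e + 1 else mult Q e)) := by
  classical
  set m : V × V → ℕ := fun e => mult Q e with hm
  set m' : V × V → ℕ := fun e => if e ∈ O then m e - 1 else if e ∈ R then m e + 1 else m e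
    with hm'
  have hQpaths := hQcover.1
  have hQne : ∀ p ∈ Q, p ≠ [] ∧ p.Nodup := fun p hp =>
    ⟨(hQpaths p hp).1, (hQpaths p hp).2.2⟩
  have hsuppE : ∀ e, m e ≠ 0 → e ∈ E := by
    intro e he
    obtain ⟨p, hpQ, hpe⟩ := exists_mem_of_mult_pos (Nat.pos_of_ne_zero he)
    exact rel_of_mem_pathEdges (hQpaths p hpQ).2.1 hpe
  have hdisj' : ∀ e, e ∈ O → e ∉ R := fun e heO heR =>
    Finset.disjoint_left.1 hdisj heO heR
  have hptwise : ∀ e, (m' e : ℤ) = (m e : ℤ)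
      + (if e ∈ R then 1 else 0) - (if e ∈ O then 1 else 0) := by
    intro e
    by_cases h1 : e ∈ O
    · have h2 : e ∉ R := hdisj' e h1
      have h3 : 0 < m e := hOpos e h1
      simp only [hm', if_pos h1, if_neg h2]
      omega
    · by_cases h2 : e ∈ R
      · simp only [hm', if_neg h1, if_pos h2]
        omega
      · simp only [hm', if_neg h1, if_neg h2]
        omega
  have hin : ∀ v, ∑ u : V, m' (u, v) = ∑ u : V, m (u, v) := by
    intro v
    have hz : (∑ u : V, (m' (u, v) : ℤ)) = ∑ u : V, (m (u, v) : ℤ) := by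
      rw [Finset.sum_congr rfl fun u _ => hptwise (u, v),
        Finset.sum_sub_distrib, Finset.sum_add_distrib,
        sum_boole_int (fun u : V => (u, v) ∈ R), sum_boole_int (fun u : V => (u, v) ∈ O),
        card_fiber_snd R v, card_fiber_snd O v, hbal2 v]
      ring
    exact_mod_cast hz
  have hout : ∀ v, ∑ u : V, m' (v, u) = ∑ u : V, m (v, u) := by
    intro v
    have hz : (∑ u : V, (m' (v, u) : ℤ)) = ∑ u : V, (m (v, u) : ℤ) := by
      rw [Finset.sum_congr rfl fun u _ => hptwise (v, u),
        Finset.sum_sub_distrib, Finset.sum_add_distrib,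
        sum_boole_int (fun u : V => (v, u) ∈ R), sum_boole_int (fun u : V => (v, u) ∈ O),
        card_fiber_fst R v, card_fiber_fst O v, hbal1 v]
      ring
    exact_mod_cast hz
  have hsupp' : ∀ e, m' e ≠ 0 → e ∈ E := by
    intro e he
    by_cases h1 : e ∈ O
    · exact hsuppE e (Nat.pos_iff_ne_zero.mp (hOpos e h1))
    · by_cases h2 : e ∈ R
      · exact hRE e h2
      · apply hsuppE e
        simp only [hm', if_neg h1, if_neg h2] at he
        exact he
  have hconsQ : ∀ v, startsC Q v + ∑ u : V, m (u, v) = endsC Q v + ∑ u : V, m (v, u) :=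
    fun v => cover_balance hQne v
  have hcons' : ∀ v, startsC Q v + ∑ u : V, m' (u, v) = endsC Q v + ∑ u : V, m' (v, u) := by
    intro v
    rw [hin v, hout v]
    exact hconsQ v
  obtain ⟨Q', hQ'path, hQ'card, hQ'mult, hQ'starts, hQ'ends⟩ :=
    decomp E hdag (∑ x : V × V, m' x) m' (startsC Q) (endsC Q) rfl hsupp' hcons'
  refine ⟨Q', ⟨hQ'path, ?_⟩, ?_, ?_⟩
  · -- coverage
    intro v
    obtain ⟨p, hpQ, hvp⟩ := hQcover.2 v
    rcases mem_iff_head_or_edge.1 hvp with hhead | ⟨u, hedge⟩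
    · have h1 : 0 < startsC Q v := by
        rw [startsC]
        apply Multiset.countP_pos.2
        exact ⟨p, hpQ, by simpa using hhead⟩
      rw [← hQ'starts v] at h1
      obtain ⟨p', hp'Q, hp'head⟩ := exists_mem_of_startsC_pos h1
      exact ⟨p', hp'Q, mem_of_head? hp'head⟩
    · have h1 : 0 < mult Q (u, v) := by
        rw [mult]
        apply Multiset.countP_pos.2
        exact ⟨p, hpQ, by simpa using hedge⟩
      have h2 : 0 < ∑ w : V, m' (w, v) := by
        rw [hin v]
        calc 0 < m (u, v) := h1
        _ ≤ ∑ w : V, m (w, v) := Finset.single_le_sum (f := fun w => m (w, v))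
            (fun _ _ => Nat.zero_le _) (Finset.mem_univ u)
      obtain ⟨w, -, hw⟩ := Finset.exists_lt_of_sum_lt (f := fun _ : V => (0 : ℕ))
        (g := fun w => m' (w, v)) (by simpa using h2)
      have h3 : 0 < mult Q' (w, v) := by
        rw [hQ'mult (w, v)]
        omega
      obtain ⟨p', hp'Q, hp'e⟩ := exists_mem_of_mult_pos h3
      exact ⟨p', hp'Q, List.mem_of_mem_tail (mem_of_mem_pathEdges hp'e).2⟩
  · rw [hQ'card, sum_startsC fun p hp => (hQne p hp).1]
  · intro e
    rw [hQ'mult e]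

end Modify

section Arith

lemma half_pow_strict (k : ℕ) (hk : 0 < k) :
    2 * ((1 : ℚ)/2) ^ k < ((1 : ℚ)/2) ^ (k - 1) + ((1 : ℚ)/2) ^ (k + 1) := by
  obtain ⟨j, rfl⟩ : ∃ j, k = j + 1 := ⟨k - 1, by omega⟩
  have hp : (0 : ℚ) < ((1 : ℚ)/2) ^ j := by positivity
  have h1 : ((1 : ℚ)/2) ^ (j + 1) = ((1 : ℚ)/2) ^ j * (1/2) := pow_succ _ _
  have h2 : ((1 : ℚ)/2) ^ (j + 1 + 1) = ((1 : ℚ)/2) ^ j * (1/2) * (1/2) := by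
    rw [pow_succ, pow_succ]
  have h3 : j + 1 - 1 = j := by omega
  rw [h1, h2, h3]
  nlinarith [hp]

end Arith

theorem stmt_12' {V : Type*} [Fintype V] [DecidableEq V] [Nonempty V]
    (E : Finset (V × V)) (hdag : IsDAG (edgeRel E)) (P : Multiset (List V)) (t : ℕ)
    (hP : IsPathCover (edgeRel E) P) (hcard : Multiset.card P = t) :
    ∃ P' : Multiset (List V), IsPathCover (edgeRel E) P' ∧ Multiset.card P' = t ∧
      Set.ncard {e : V × V | ∃ p ∈ P', e ∈ pathEdges p} < 2 * Fintype.card V := by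
  classical
  -- the finite set of candidate covers
  have hLfin : {l : List V | l.Nodup}.Finite := by
    apply Set.Finite.subset (List.finite_length_le V (Fintype.card V))
    intro l hl
    exact hl.length_le_card
  set Lfin : Finset (List V) := hLfin.toFinset with hLdef
  have hmemL : ∀ {Q : Multiset (List V)}, Multiset.card Q = t → (∀ p ∈ Q, p.Nodup) →
      Q ∈ (t • Lfin.val).powerset.toFinset := by
    intro Q hcardQ hnodup
    rw [Multiset.mem_toFinset, Multiset.mem_powerset, Multiset.le_iff_count]
    intro a
    by_cases ha : a ∈ Q
    · have h1 : a ∈ Lfin := hLfin.mem_toFinset.2 (hnodup a ha)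
      have h2 : Multiset.count a (t • Lfin.val) = t * Multiset.count a Lfin.val :=
        Multiset.count_nsmul a t _
      have h3 : Multiset.count a Lfin.val = 1 :=
        Multiset.count_eq_one_of_mem Lfin.nodup h1
      have h4 : Multiset.count a Q ≤ Multiset.card Q := Multiset.count_le_card a Q
      rw [h2, h3, mul_one, ← hcardQ]
      exact h4
    · simp [Multiset.count_eq_zero_of_notMem ha]
  set F : Multiset (List V) → ℚ := fun Q => ∑ e : V × V, ((1 : ℚ)/2) ^ (mult Q e) with hFdef
  set candidates : Finset (Multiset (List V)) :=
    ((t • Lfin.val).powerset.toFinset).filter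
      (fun Q => IsPathCover (edgeRel E) Q ∧ Multiset.card Q = t) with hcanddef
  have hPmem : P ∈ candidates := by
    rw [hcanddef, Finset.mem_filter]
    exact ⟨hmemL hcard (fun p hp => (hP.1 p hp).2.2), hP, hcard⟩
  obtain ⟨Q, hQmem, hQmax⟩ := Finset.exists_max_image candidates F ⟨P, hPmem⟩
  obtain ⟨-, hQcover, hQcard⟩ := Finset.mem_filter.1 hQmem
  refine ⟨Q, hQcover, hQcard, ?_⟩
  by_contra hbig
  push_neg at hbig
  -- support as a finset
  set Sfin : Finset (V × V) := Finset.univ.filter (fun e : V × V => 0 < mult Q e) with hSdef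
  have hseteq : {e : V × V | ∃ p ∈ Q, e ∈ pathEdges p} = ↑Sfin := by
    ext e
    simp [hSdef, mult, Multiset.countP_pos]
  rw [hseteq, Set.ncard_coe_finset] at hbig
  obtain ⟨O, R, hOS, hRS, hdisj, hOne, hRne, hbal2, hbal1⟩ :=
    exists_alternating_cycle Sfin hbig
  have hOpos : ∀ e ∈ O, 0 < mult Q e := fun e he => (Finset.mem_filter.1 (hOS he)).2
  have hRpos : ∀ e ∈ R, 0 < mult Q e := fun e he => (Finset.mem_filter.1 (hRS he)).2
  have hsuppE : ∀ e, 0 < mult Q e → e ∈ E := by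
    intro e he
    obtain ⟨p, hpQ, hpe⟩ := exists_mem_of_mult_pos he
    exact rel_of_mem_pathEdges (hQcover.1 p hpQ).2.1 hpe
  have hRE : ∀ e ∈ R, e ∈ E := fun e he => hsuppE e (hRpos e he)
  have hOE : ∀ e ∈ O, e ∈ E := fun e he => hsuppE e (hOpos e he)
  obtain ⟨Q1, hQ1cover, hQ1card, hQ1mult⟩ :=
    modified_cover E hdag hQcover hOpos hRE hdisj hbal2 hbal1
  obtain ⟨Q2, hQ2cover, hQ2card, hQ2mult⟩ :=
    modified_cover E hdag hQcover hRpos hOE hdisj.symm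
      (fun v => (hbal2 v).symm) (fun v => (hbal1 v).symm)
  have hQ1mem : Q1 ∈ candidates := by
    rw [hcanddef, Finset.mem_filter]
    exact ⟨hmemL (hQ1card.trans hQcard) (fun p hp => (hQ1cover.1 p hp).2.2),
      hQ1cover, hQ1card.trans hQcard⟩
  have hQ2mem : Q2 ∈ candidates := by
    rw [hcanddef, Finset.mem_filter]
    exact ⟨hmemL (hQ2card.trans hQcard) (fun p hp => (hQ2cover.1 p hp).2.2),
      hQ2cover, hQ2card.trans hQcard⟩
  have hsumlt : ∑ e : V × V, 2 * ((1 : ℚ)/2) ^ (mult Q e)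
      < ∑ e : V × V, (((1 : ℚ)/2) ^ (mult Q1 e) + ((1 : ℚ)/2) ^ (mult Q2 e)) := by
    apply Finset.sum_lt_sum
    · intro e _
      rw [hQ1mult e, hQ2mult e]
      by_cases h1 : e ∈ O
      · have h2 : e ∉ R := Finset.disjoint_left.1 hdisj h1
        rw [if_pos h1, if_neg h2, if_pos h1]
        exact le_of_lt (half_pow_strict (mult Q e) (hOpos e h1))
      · by_cases h2 : e ∈ R
        · rw [if_neg h1, if_pos h2, if_pos h2]
          have := half_pow_strict (mult Q e) (hRpos e h2)
          linarith
        · rw [if_neg h1, if_neg h2, if_neg h1, if_neg h2]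
          ring_nf
          exact le_refl _
    · obtain ⟨e, he⟩ := hOne
      refine ⟨e, Finset.mem_univ e, ?_⟩
      rw [hQ1mult e, hQ2mult e]
      have h2 : e ∉ R := Finset.disjoint_left.1 hdisj he
      rw [if_pos he, if_neg h2, if_pos he]
      exact half_pow_strict (mult Q e) (hOpos e he)
  have h1 : F Q1 ≤ F Q := hQmax Q1 hQ1mem
  have h2 : F Q2 ≤ F Q := hQmax Q2 hQ2mem
  have h3 : ∑ e : V × V, 2 * ((1 : ℚ)/2) ^ (mult Q e) = 2 * F Q := by
    rw [hFdef, Finset.mul_sum]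
  have h4 : ∑ e : V × V, (((1 : ℚ)/2) ^ (mult Q1 e) + ((1 : ℚ)/2) ^ (mult Q2 e))
      = F Q1 + F Q2 := by
    rw [hFdef, Finset.sum_add_distrib]
  rw [h3, h4] at hsumlt
  linarith


/-- every path cover of size `t` of a DAG can be transformed into one of
the same size whose support has fewer than `2|V|` distinct edges. -/
theorem stmt_12 {V : Type*} [Fintype V] [DecidableEq V] [Nonempty V]
    (E : Finset (V × V)) (hdag : IsDAG (edgeRel E)) (P : Multiset (List V)) (t : ℕ)
    (hP : IsPathCover (edgeRel E) P) (hcard : Multiset.card P = t) :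
    ∃ P' : Multiset (List V), IsPathCover (edgeRel E) P' ∧ Multiset.card P' = t ∧
      Set.ncard {e : V × V | ∃ p ∈ P', e ∈ pathEdges p} < 2 * Fintype.card V := by
  exact stmt_12' E hdag P t hP hcard
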